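/- Let p be a prime, H > 0, and let X = (X_n)_{n∈ℕ₀} be a dt-ss-si process with scaling function b(n) = (|n|_p)^H. Then X₁ and −X₁ have the same distribution. Consequently, if E|X₁| < ∞, then E(X_n) = 0 for all n ∈ ℕ₀. -/

import Mathlib

open MeasureTheory ProbabilityTheory Filter Topology

noncomputable section

/-- The `p`-adic norm of a natural number, as a real number (`0` for `n = 0`). -/
def padicNormNat (p n : ℕ) : ℝ := ((padicNorm p (n : ℚ) : ℚ) : ℝ)

/-- Equality in distribution of two families of random variables: the laws of the
induced maps into the product space coincide. -/
def EqDistFam {ι Ω₁ Ω₂ E : Type*} [MeasurableSpace Ω₁] [MeasurableSpace Ω₂]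
    [MeasurableSpace E]
    (P₁ : Measure Ω₁) (P₂ : Measure Ω₂) (X : ι → Ω₁ → E) (Y : ι → Ω₂ → E) : Prop :=
  Measure.map (fun ω i => X i ω) P₁ = Measure.map (fun ω i => Y i ω) P₂

/-- A discrete-time process is self-similar with scaling function `b` if for every `n ≥ 1`,
`(X (n*m))ₘ ≐ (b n • X m)ₘ`. -/
def SelfSimilar {Ω : Type*} [MeasurableSpace Ω] (P : Measure Ω) (X : ℕ → Ω → ℝ)
    (b : ℕ → ℝ) : Prop :=
  ∀ n : ℕ, 1 ≤ n → EqDistFam P P (fun m ω => X (n * m) ω) (fun m ω => b n * X m ω)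

/-- A discrete-time process has stationary increments if for every `k ≥ 1`,
`(X (m+1) - X m)ₘ ≐ (X (m+k+1) - X (m+k))ₘ`. -/
def StationaryIncrements {Ω : Type*} [MeasurableSpace Ω] (P : Measure Ω)
    (X : ℕ → Ω → ℝ) : Prop :=
  ∀ k : ℕ, 1 ≤ k → EqDistFam P P (fun m ω => X (m + 1) ω - X m ω)
    (fun m ω => X (m + k + 1) ω - X (m + k) ω)

/-- Marginal extraction from equality in distribution of families. -/
lemma eqDistFam_apply {Ω : Type*} [MeasurableSpace Ω] {P : Measure Ω}
    {F G : ℕ → Ω → ℝ} (h : EqDistFam P P F G)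
    (hF : ∀ i, Measurable (F i)) (hG : ∀ i, Measurable (G i)) (m : ℕ) :
    Measure.map (F m) P = Measure.map (G m) P := by
  have hFm : Measurable fun ω (i : ℕ) => F i ω := measurable_pi_lambda _ hF
  have hGm : Measurable fun ω (i : ℕ) => G i ω := measurable_pi_lambda _ hG
  have h' := congrArg (Measure.map (fun f : ℕ → ℝ => f m)) h
  rwa [Measure.map_map (measurable_pi_apply m) hFm,
    Measure.map_map (measurable_pi_apply m) hGm] at h'

/-- Transfer of event probabilities along an equality of laws. -/
lemma prob_preimage_eq {Ω : Type*} [MeasurableSpace Ω] {P : Measure Ω} {Y Z : Ω → ℝ}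
    (hY : Measurable Y) (hZ : Measurable Z) (h : Measure.map Y P = Measure.map Z P)
    {s : Set ℝ} (hs : MeasurableSet s) : P (Y ⁻¹' s) = P (Z ⁻¹' s) := by
  rw [← Measure.map_apply hY hs, h, Measure.map_apply hZ hs]

lemma padicNorm_pow' (p : ℕ) [Fact p.Prime] (q : ℚ) (j : ℕ) : padicNorm p (q ^ j) = padicNorm p q ^ j := by
  induction j with
  | zero => simp [padicNorm.one]
  | succ n ih => rw [pow_succ, pow_succ, padicNorm.mul, ih]

/-- Tail probabilities tend to zero. -/
lemma tail_tendsto {Ω : Type*} [MeasurableSpace Ω] (P : Measure Ω) [IsProbabilityMeasure P]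
    {Y : Ω → ℝ} (hY : Measurable Y) :
    Tendsto (fun M : ℕ => P (Y ⁻¹' {x : ℝ | (M : ℝ) < |x|})) atTop (𝓝 0) := by
  have hms : ∀ M : ℕ, MeasurableSet {x : ℝ | (M : ℝ) < |x|} := fun M =>
    measurableSet_lt measurable_const measurable_abs
  have h := tendsto_measure_iInter_atTop (μ := P)
    (s := fun M : ℕ => Y ⁻¹' {x : ℝ | (M : ℝ) < |x|})
    (fun M => (hY (hms M)).nullMeasurableSet)
    (fun a b hab ω hω => by
      simp only [Set.mem_preimage, Set.mem_setOf_eq] at hω ⊢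
      exact lt_of_le_of_lt (by exact_mod_cast hab) hω)
    ⟨0, measure_ne_top P _⟩
  have hempty : (⋂ M : ℕ, Y ⁻¹' {x : ℝ | (M : ℝ) < |x|}) = ∅ := by
    ext ω
    simp only [Set.mem_iInter, Set.mem_preimage, Set.mem_setOf_eq, Set.mem_empty_iff_false,
      iff_false, not_forall, not_lt]
    obtain ⟨M, hM⟩ := exists_nat_gt |Y ω|
    exact ⟨M, hM.le⟩
  rwa [hempty, measure_empty] at h

/-- Right-continuity of the CDF (as a limit along `1/(m+1)`). -/
lemma cdf_shrink {Ω : Type*} [MeasurableSpace Ω] (P : Measure Ω) [IsProbabilityMeasure P]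
    {Z : Ω → ℝ} (hZ : Measurable Z) (t : ℝ) :
    Tendsto (fun m : ℕ => P (Z ⁻¹' Set.Iic (t + 1 / ((m : ℝ) + 1)))) atTop
      (𝓝 (P (Z ⁻¹' Set.Iic t))) := by
  have h := tendsto_measure_iInter_atTop (μ := P)
    (s := fun m : ℕ => Z ⁻¹' Set.Iic (t + 1 / ((m : ℝ) + 1)))
    (fun m => (hZ measurableSet_Iic).nullMeasurableSet)
    (fun a b hab ω hω => by
      simp only [Set.mem_preimage, Set.mem_Iic] at hω ⊢
      have h1 : ((a : ℝ) + 1) ≤ (b : ℝ) + 1 := by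
        have : (a : ℝ) ≤ b := by exact_mod_cast hab
        linarith
      have h2 : 1 / ((b : ℝ) + 1) ≤ 1 / ((a : ℝ) + 1) :=
        one_div_le_one_div_of_le (by positivity) h1
      linarith)
    ⟨0, measure_ne_top P _⟩
  have hInter : (⋂ m : ℕ, Z ⁻¹' Set.Iic (t + 1 / ((m : ℝ) + 1))) = Z ⁻¹' Set.Iic t := by
    ext ω
    simp only [Set.mem_iInter, Set.mem_preimage, Set.mem_Iic]
    constructor
    · intro hω
      by_contra h'
      push_neg at h'
      obtain ⟨m, hm⟩ := exists_nat_one_div_lt (sub_pos.mpr h')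
      have := hω m
      linarith
    · intro hω m
      have : (0 : ℝ) < 1 / ((m : ℝ) + 1) := by positivity
      linarith
  rwa [hInter] at h

/-- Proposition 2.6 (3): for a type-II dt-ss-si process, `X 1` is symmetric;
consequently, if `X 1` is integrable then every `X n` has zero mean. -/
theorem stmt9 {Ω : Type*} [MeasurableSpace Ω] (P : Measure Ω) [IsProbabilityMeasure P]
    (X : ℕ → Ω → ℝ) (hXmeas : ∀ n, Measurable (X n))
    (p : ℕ) (hp : p.Prime) (H : ℝ) (hH : 0 < H)
    (hss : SelfSimilar P X (fun n => (padicNormNat p n) ^ H))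
    (hsi : StationaryIncrements P X) :
    IdentDistrib (X 1) (fun ω => -X 1 ω) P P ∧
    (Integrable (X 1) P → ∀ n : ℕ, ∫ ω, X n ω ∂P = 0) := by
  haveI : Fact p.Prime := ⟨hp⟩
  have hp1R : (1 : ℝ) < p := by exact_mod_cast hp.one_lt
  have hpinv0 : (0 : ℝ) ≤ ((p : ℝ))⁻¹ := by positivity
  set c : ℕ → ℝ := fun j => (padicNormNat p (p ^ j)) ^ H with hc_def
  set qH : ℝ := ((p : ℝ))⁻¹ ^ H with hqH_def
  have hpadic : ∀ j : ℕ, padicNormNat p (p ^ j) = ((p : ℝ))⁻¹ ^ j := by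
    intro j
    unfold padicNormNat
    rw [show ((p ^ j : ℕ) : ℚ) = (p : ℚ) ^ j by push_cast; ring, padicNorm_pow' p _ j,
      padicNorm.padicNorm_p hp.one_lt]
    push_cast
    ring
  have hcq : ∀ j : ℕ, c j = qH ^ j := by
    intro j
    rw [hc_def, hqH_def]
    simp only
    rw [hpadic j, ← Real.rpow_natCast ((p : ℝ))⁻¹ j,
      ← Real.rpow_natCast (((p : ℝ))⁻¹ ^ H) j,
      ← Real.rpow_mul hpinv0, ← Real.rpow_mul hpinv0, mul_comm]
  have hqH0 : 0 < qH := Real.rpow_pos_of_pos (by positivity) H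
  have hqH1 : qH < 1 :=
    Real.rpow_lt_one hpinv0 ((inv_lt_one₀ (by positivity)).mpr hp1R) hH
  have hc0 : ∀ j, 0 < c j := fun j => by rw [hcq j]; positivity
  have htends : Tendsto (fun j : ℕ => qH ^ j) atTop (𝓝 0) :=
    tendsto_pow_atTop_nhds_zero_of_lt_one hqH0.le hqH1
  have hchoose : ∀ δ : ℝ, 0 < δ → ∃ j : ℕ, 1 ≤ j ∧ c j < δ := by
    intro δ hδ
    obtain ⟨j, hj1, hj2⟩ :=
      ((eventually_ge_atTop 1).and (htends.eventually (gt_mem_nhds hδ))).exists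
    exact ⟨j, hj1, by rw [hcq j]; exact hj2⟩
  have hlaw : ∀ j m : ℕ, Measure.map (X (p ^ j * m)) P
      = Measure.map (fun ω => c j * X m ω) P := by
    intro j m
    exact eqDistFam_apply (hss (p ^ j) (Nat.one_le_iff_ne_zero.mpr (pow_ne_zero j hp.pos.ne')))
      (fun i => hXmeas _) (fun i => (hXmeas i).const_mul _) m
  have hlaw0 : ∀ j : ℕ, Measure.map (X 0) P = Measure.map (fun ω => c j * X 0 ω) P := by
    intro j
    have h := hlaw j 0
    rwa [Nat.mul_zero] at h
  have hlaw1 : ∀ j : ℕ, Measure.map (X (p ^ j)) P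
      = Measure.map (fun ω => c j * X 1 ω) P := by
    intro j
    have h := hlaw j 1
    rwa [Nat.mul_one] at h
  have hlawcop : ∀ n : ℕ, 1 ≤ n → ¬ p ∣ n →
      Measure.map (X n) P = Measure.map (X 1) P := by
    intro n hn hdvd
    have hb : padicNormNat p n ^ H = 1 := by
      unfold padicNormNat
      rw [(padicNorm.nat_eq_one_iff n).mpr hdvd]
      norm_num
    have h := eqDistFam_apply (hss n hn) (fun i => hXmeas _)
      (fun i => (hXmeas i).const_mul _) 1
    rw [Nat.mul_one] at h
    simpa [hb] using h
  have hmsAbs : ∀ ε : ℝ, MeasurableSet {x : ℝ | ε < |x|} := fun ε =>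
    measurableSet_lt measurable_const measurable_abs
  have hmsNeg : ∀ a : ℝ, MeasurableSet {x : ℝ | -x ≤ a} := fun a =>
    measurableSet_le measurable_id.neg measurable_const
  -- X 0 = 0 a.s.
  have hX0small : ∀ ε : ℝ, 0 < ε → P (X 0 ⁻¹' {x : ℝ | ε < |x|}) = 0 := by
    intro ε hε
    have hle : ∀ M : ℕ, P (X 0 ⁻¹' {x : ℝ | ε < |x|})
        ≤ P (X 0 ⁻¹' {x : ℝ | (M : ℝ) < |x|}) := by
      intro M
      have hM1 : (0 : ℝ) < (M : ℝ) + 1 := by positivity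
      obtain ⟨j, _, hj⟩ := hchoose (ε / ((M : ℝ) + 1)) (by positivity)
      have he : P (X 0 ⁻¹' {x : ℝ | ε < |x|})
          = P ((fun ω => c j * X 0 ω) ⁻¹' {x : ℝ | ε < |x|}) :=
        prob_preimage_eq (hXmeas 0) ((hXmeas 0).const_mul _) (hlaw0 j) (hmsAbs ε)
      rw [he]
      refine measure_mono ?_
      intro ω hω
      simp only [Set.mem_preimage, Set.mem_setOf_eq] at hω ⊢
      rw [abs_mul, abs_of_pos (hc0 j)] at hω
      have hcM : c j * ((M : ℝ) + 1) ≤ ε := ((lt_div_iff₀ hM1).mp hj).le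
      have h1 : c j * ((M : ℝ) + 1) < c j * |X 0 ω| := lt_of_le_of_lt hcM hω
      have h2 : (M : ℝ) + 1 < |X 0 ω| := lt_of_mul_lt_mul_left h1 (hc0 j).le
      linarith
    have h0 := ge_of_tendsto' (tail_tendsto P (hXmeas 0)) hle
    exact le_antisymm h0 (zero_le)
  have hX0 : ∀ᵐ ω ∂P, X 0 ω = 0 := by
    rw [ae_iff]
    have hsub : {ω | ¬ X 0 ω = 0} ⊆ ⋃ m : ℕ, X 0 ⁻¹' {x : ℝ | 1 / ((m : ℝ) + 1) < |x|} := by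
      intro ω hω
      simp only [Set.mem_setOf_eq] at hω
      obtain ⟨m, hm⟩ := exists_nat_one_div_lt (abs_pos.mpr hω)
      exact Set.mem_iUnion.mpr ⟨m, hm⟩
    refine le_antisymm (le_trans (measure_mono hsub) ?_) (zero_le)
    rw [measure_iUnion_null fun m => hX0small _ (by positivity)]
  -- increments law
  have hlawInc : ∀ k : ℕ, Measure.map (fun ω => X (k + 1) ω - X k ω) P
      = Measure.map (X 1) P := by
    intro k
    have hbase : Measure.map (fun ω => X 1 ω - X 0 ω) P = Measure.map (X 1) P := by
      apply Measure.map_congr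
      filter_upwards [hX0] with ω hω
      rw [hω, sub_zero]
    rcases Nat.eq_zero_or_pos k with hk | hk
    · subst hk; exact hbase
    · have h := eqDistFam_apply (hsi k hk)
        (fun i => (hXmeas _).sub (hXmeas _)) (fun i => (hXmeas _).sub (hXmeas _)) 0
      simp only [Nat.zero_add] at h
      rw [← h]
      exact hbase
  have htail1 := tail_tendsto P (hXmeas 1)
  -- key quantitative inequalities
  have key : ∀ (t ε : ℝ), 0 < ε → ∀ M : ℕ,
      (P (X 1 ⁻¹' Set.Iic t) ≤ P (X 1 ⁻¹' {x : ℝ | -x ≤ t + ε})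
        + P (X 1 ⁻¹' {x : ℝ | (M : ℝ) < |x|})) ∧
      (P (X 1 ⁻¹' {x : ℝ | -x ≤ t}) ≤ P (X 1 ⁻¹' Set.Iic (t + ε))
        + P (X 1 ⁻¹' {x : ℝ | (M : ℝ) < |x|})) := by
    intro t ε hε M
    have hM1 : (0 : ℝ) < (M : ℝ) + 1 := by positivity
    obtain ⟨j, hj1, hj⟩ := hchoose (ε / ((M : ℝ) + 1)) (by positivity)
    have hN2 : 2 ≤ p ^ j := le_trans hp.two_le (Nat.le_self_pow (by omega) p)
    set n : ℕ := p ^ j - 1 with hn_def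
    have hnN : n + 1 = p ^ j := by omega
    have hn1 : 1 ≤ n := by omega
    have hndvd : ¬ p ∣ n := by
      intro hdvd
      have hdN : p ∣ p ^ j := dvd_pow_self p (by omega)
      have h1 : p ∣ p ^ j - n := Nat.dvd_sub hdN hdvd
      rw [show p ^ j - n = 1 by omega] at h1
      have := Nat.le_of_dvd one_pos h1
      have := hp.two_le
      omega
    -- tail estimate for X (n+1) = X (p^j)
    have htailN : P (X (n + 1) ⁻¹' {x : ℝ | ε < |x|})
        ≤ P (X 1 ⁻¹' {x : ℝ | (M : ℝ) < |x|}) := by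
      have he : P (X (n + 1) ⁻¹' {x : ℝ | ε < |x|})
          = P ((fun ω => c j * X 1 ω) ⁻¹' {x : ℝ | ε < |x|}) := by
        rw [hnN]
        exact prob_preimage_eq (hXmeas _) ((hXmeas 1).const_mul _) (hlaw1 j) (hmsAbs ε)
      rw [he]
      refine measure_mono ?_
      intro ω hω
      simp only [Set.mem_preimage, Set.mem_setOf_eq] at hω ⊢
      rw [abs_mul, abs_of_pos (hc0 j)] at hω
      have hcM : c j * ((M : ℝ) + 1) ≤ ε := ((lt_div_iff₀ hM1).mp hj).le
      have h1 : c j * ((M : ℝ) + 1) < c j * |X 1 ω| := lt_of_le_of_lt hcM hω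
      have h2 : (M : ℝ) + 1 < |X 1 ω| := lt_of_mul_lt_mul_left h1 (hc0 j).le
      linarith
    have hmeasInc : Measurable fun ω => X (n + 1) ω - X n ω :=
      (hXmeas _).sub (hXmeas _)
    have hmeasIncNeg : Measurable fun ω => X n ω - X (n + 1) ω :=
      (hXmeas _).sub (hXmeas _)
    have hlawNegInc : Measure.map (fun ω => X n ω - X (n + 1) ω) P
        = Measure.map (fun ω => -X 1 ω) P := by
      have h' := congrArg (Measure.map (fun x : ℝ => -x)) (hlawInc n)
      rw [Measure.map_map measurable_neg hmeasInc,
        Measure.map_map measurable_neg (hXmeas 1)] at h'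
      have hfun : ((fun x : ℝ => -x) ∘ fun ω => X (n + 1) ω - X n ω)
          = fun ω => X n ω - X (n + 1) ω := funext fun ω => by
        simp [Function.comp, neg_sub]
      rwa [hfun] at h'
    constructor
    · -- first inequality
      have e1 : P (X 1 ⁻¹' Set.Iic t)
          = P ((fun ω => X (n + 1) ω - X n ω) ⁻¹' Set.Iic t) :=
        prob_preimage_eq (hXmeas 1) hmeasInc (hlawInc n).symm measurableSet_Iic
      have e2 : P (X n ⁻¹' {x : ℝ | -x ≤ t + ε}) = P (X 1 ⁻¹' {x : ℝ | -x ≤ t + ε}) :=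
        prob_preimage_eq (hXmeas n) (hXmeas 1) (hlawcop n hn1 hndvd) (hmsNeg _)
      have hincl : (fun ω => X (n + 1) ω - X n ω) ⁻¹' Set.Iic t
          ⊆ (X n ⁻¹' {x : ℝ | -x ≤ t + ε}) ∪ (X (n + 1) ⁻¹' {x : ℝ | ε < |x|}) := by
        intro ω hω
        simp only [Set.mem_preimage, Set.mem_Iic] at hω
        by_cases hA : ε < |X (n + 1) ω|
        · exact Or.inr hA
        · push_neg at hA
          obtain ⟨hA1, hA2⟩ := abs_le.mp hA
          exact Or.inl (by simp only [Set.mem_preimage, Set.mem_setOf_eq]; linarith)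
      calc P (X 1 ⁻¹' Set.Iic t)
          = P ((fun ω => X (n + 1) ω - X n ω) ⁻¹' Set.Iic t) := e1
        _ ≤ P ((X n ⁻¹' {x : ℝ | -x ≤ t + ε}) ∪ (X (n + 1) ⁻¹' {x : ℝ | ε < |x|})) :=
            measure_mono hincl
        _ ≤ P (X n ⁻¹' {x : ℝ | -x ≤ t + ε}) + P (X (n + 1) ⁻¹' {x : ℝ | ε < |x|}) :=
            measure_union_le _ _
        _ ≤ P (X 1 ⁻¹' {x : ℝ | -x ≤ t + ε}) + P (X 1 ⁻¹' {x : ℝ | (M : ℝ) < |x|}) := by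
            rw [e2]; exact add_le_add le_rfl htailN
    · -- second inequality
      have e1 : P (X 1 ⁻¹' {x : ℝ | -x ≤ t})
          = P ((fun ω => X n ω - X (n + 1) ω) ⁻¹' Set.Iic t) := by
        have := prob_preimage_eq hmeasIncNeg (hXmeas 1).neg hlawNegInc
          (measurableSet_Iic (a := t))
        exact this.symm
      have e2 : P (X n ⁻¹' Set.Iic (t + ε)) = P (X 1 ⁻¹' Set.Iic (t + ε)) :=
        prob_preimage_eq (hXmeas n) (hXmeas 1) (hlawcop n hn1 hndvd) measurableSet_Iic
      have hincl : (fun ω => X n ω - X (n + 1) ω) ⁻¹' Set.Iic t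
          ⊆ (X n ⁻¹' Set.Iic (t + ε)) ∪ (X (n + 1) ⁻¹' {x : ℝ | ε < |x|}) := by
        intro ω hω
        simp only [Set.mem_preimage, Set.mem_Iic] at hω
        by_cases hA : ε < |X (n + 1) ω|
        · exact Or.inr hA
        · push_neg at hA
          obtain ⟨hA1, hA2⟩ := abs_le.mp hA
          exact Or.inl (by simp only [Set.mem_preimage, Set.mem_Iic]; linarith)
      calc P (X 1 ⁻¹' {x : ℝ | -x ≤ t})
          = P ((fun ω => X n ω - X (n + 1) ω) ⁻¹' Set.Iic t) := e1
        _ ≤ P ((X n ⁻¹' Set.Iic (t + ε)) ∪ (X (n + 1) ⁻¹' {x : ℝ | ε < |x|})) :=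
            measure_mono hincl
        _ ≤ P (X n ⁻¹' Set.Iic (t + ε)) + P (X (n + 1) ⁻¹' {x : ℝ | ε < |x|}) :=
            measure_union_le _ _
        _ ≤ P (X 1 ⁻¹' Set.Iic (t + ε)) + P (X 1 ⁻¹' {x : ℝ | (M : ℝ) < |x|}) := by
            rw [e2]; exact add_le_add le_rfl htailN
  -- pass to the limit in M
  have step : ∀ (t ε : ℝ), 0 < ε →
      (P (X 1 ⁻¹' Set.Iic t) ≤ P (X 1 ⁻¹' {x : ℝ | -x ≤ t + ε})) ∧
      (P (X 1 ⁻¹' {x : ℝ | -x ≤ t}) ≤ P (X 1 ⁻¹' Set.Iic (t + ε))) := by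
    intro t ε hε
    constructor
    · have hlim : Tendsto (fun M : ℕ => P (X 1 ⁻¹' {x : ℝ | -x ≤ t + ε})
          + P (X 1 ⁻¹' {x : ℝ | (M : ℝ) < |x|})) atTop
          (𝓝 (P (X 1 ⁻¹' {x : ℝ | -x ≤ t + ε}) + 0)) :=
        Tendsto.add tendsto_const_nhds htail1
      have := ge_of_tendsto' hlim (fun M => (key t ε hε M).1)
      rwa [add_zero] at this
    · have hlim : Tendsto (fun M : ℕ => P (X 1 ⁻¹' Set.Iic (t + ε))
          + P (X 1 ⁻¹' {x : ℝ | (M : ℝ) < |x|})) atTop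
          (𝓝 (P (X 1 ⁻¹' Set.Iic (t + ε)) + 0)) :=
        Tendsto.add tendsto_const_nhds htail1
      have := ge_of_tendsto' hlim (fun M => (key t ε hε M).2)
      rwa [add_zero] at this
  -- pass to the limit in ε, get equality of CDFs
  have hBset : ∀ a : ℝ, X 1 ⁻¹' {x : ℝ | -x ≤ a} = (fun ω => -X 1 ω) ⁻¹' Set.Iic a :=
    fun a => rfl
  have hcdf : ∀ t : ℝ, P (X 1 ⁻¹' Set.Iic t) = P ((fun ω => -X 1 ω) ⁻¹' Set.Iic t) := by
    intro t
    have h1 : P (X 1 ⁻¹' Set.Iic t) ≤ P ((fun ω => -X 1 ω) ⁻¹' Set.Iic t) := by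
      have hlim := cdf_shrink P (hXmeas 1).neg t
      refine ge_of_tendsto' hlim (fun m => ?_)
      have := (step t (1 / ((m : ℝ) + 1)) (by positivity)).1
      rwa [hBset] at this
    have h2 : P ((fun ω => -X 1 ω) ⁻¹' Set.Iic t) ≤ P (X 1 ⁻¹' Set.Iic t) := by
      have hlim := cdf_shrink P (hXmeas 1) t
      refine ge_of_tendsto' hlim (fun m => ?_)
      have := (step t (1 / ((m : ℝ) + 1)) (by positivity)).2
      rwa [hBset] at this
    exact le_antisymm h1 h2
  -- conclude equality of laws
  have hmapeq : Measure.map (X 1) P = Measure.map (fun ω => -X 1 ω) P := by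
    haveI h1 : IsProbabilityMeasure (Measure.map (X 1) P) :=
      Measure.isProbabilityMeasure_map (hXmeas 1).aemeasurable
    haveI h2 : IsProbabilityMeasure (Measure.map (fun ω => -X 1 ω) P) :=
      Measure.isProbabilityMeasure_map (hXmeas 1).neg.aemeasurable
    refine Measure.ext_of_Iic _ _ (fun t => ?_)
    rw [Measure.map_apply (hXmeas 1) measurableSet_Iic,
      Measure.map_apply (f := fun ω => -X 1 ω) (hXmeas 1).neg measurableSet_Iic]
    exact hcdf t
  have hsym : IdentDistrib (X 1) (fun ω => -X 1 ω) P P :=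
    ⟨(hXmeas 1).aemeasurable, (hXmeas 1).neg.aemeasurable, hmapeq⟩
  refine ⟨hsym, fun hint => ?_⟩
  -- part 2: zero means
  have hint1 : ∫ ω, X 1 ω ∂P = 0 := by
    have h := hsym.integral_eq
    rw [integral_neg] at h
    linarith
  have hincId : ∀ k : ℕ, IdentDistrib (fun ω => X (k + 1) ω - X k ω) (X 1) P P :=
    fun k => ⟨((hXmeas _).sub (hXmeas _)).aemeasurable, (hXmeas 1).aemeasurable, hlawInc k⟩
  have main : ∀ n : ℕ, Integrable (X n) P ∧ ∫ ω, X n ω ∂P = 0 := by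
    intro n
    induction n with
    | zero =>
      constructor
      · exact (integrable_const (0 : ℝ)).congr (hX0.mono fun ω h => h.symm)
      · rw [integral_congr_ae hX0]
        simp
    | succ k ih =>
      have hincInt : Integrable (fun ω => X (k + 1) ω - X k ω) P :=
        (hincId k).integrable_iff.mpr hint
      have hincZero : ∫ ω, (X (k + 1) ω - X k ω) ∂P = 0 := by
        rw [(hincId k).integral_eq]
        exact hint1
      have hXk1 : X (k + 1) = fun ω => X k ω + (X (k + 1) ω - X k ω) := by
        funext ω; ring
      constructor
      · rw [hXk1]; exact ih.1.add hincInt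
      · rw [hXk1, integral_add ih.1 hincInt, ih.2, hincZero, add_zero]
  exact fun n => (main n).2
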